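/- Let Y be a real Banach space, τ > 0, λ : ℝ → ℝ continuously differentiable with λ(0) ≠ 0, and φ : ℝ → Y continuous. Define g(t) = λ(0) φ(t) + ∫_0^t λ'(t-s) φ(s) ds. Then (∫_0^τ ‖φ(t)‖² dt)^{1/2} ≤ (√2 / |λ(0)|) · exp( τ · (∫_0^τ λ'(t)² dt) / λ(0)² ) · (∫_0^τ ‖g(t)‖² dt)^{1/2}. -/

import Mathlib

open MeasureTheory intervalIntegral

lemma memL2_aux {f : ℝ → ℝ} (hf : Continuous f) (a b : ℝ) :
    MemLp f (ENNReal.ofReal 2) (volume.restrict (Set.Ioc a b)) := by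
  haveI : IsFiniteMeasure (volume.restrict (Set.Ioc a b)) :=
    ⟨by rw [Measure.restrict_apply_univ]; exact measure_Ioc_lt_top⟩
  obtain ⟨C, hC⟩ := (isCompact_Icc (a := a) (b := b)).exists_bound_of_continuousOn
    hf.continuousOn
  refine MemLp.of_bound hf.aestronglyMeasurable C ?_
  filter_upwards [ae_restrict_mem measurableSet_Ioc] with x hx
  exact hC x (Set.Ioc_subset_Icc_self hx)

lemma cs_aux {f g : ℝ → ℝ} (hf : Continuous f) (hg : Continuous g)
    (hf0 : ∀ x, 0 ≤ f x) (hg0 : ∀ x, 0 ≤ g x) {a b : ℝ} (hab : a ≤ b) :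
    (∫ x in a..b, f x * g x)
      ≤ Real.sqrt (∫ x in a..b, f x ^ 2) * Real.sqrt (∫ x in a..b, g x ^ 2) := by
  rw [intervalIntegral.integral_of_le hab, intervalIntegral.integral_of_le hab,
    intervalIntegral.integral_of_le hab]
  have hpq : (2 : ℝ).HolderConjugate 2 := by
    rw [Real.holderConjugate_iff]; constructor <;> norm_num
  have h := MeasureTheory.integral_mul_le_Lp_mul_Lq_of_nonneg hpq
    (Filter.Eventually.of_forall hf0) (Filter.Eventually.of_forall hg0)
    (memL2_aux hf a b) (memL2_aux hg a b)
  have e1 : ∀ (u : ℝ → ℝ), (∫ x in Set.Ioc a b, u x ^ (2 : ℝ)) = ∫ x in Set.Ioc a b, u x ^ 2 := by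
    intro u
    refine integral_congr_ae (Filter.Eventually.of_forall fun x => ?_)
    simp only [Real.rpow_two]
  rw [e1, e1] at h
  refine h.trans ?_
  rw [Real.sqrt_eq_rpow, Real.sqrt_eq_rpow]

theorem stmt6 {Y : Type*} [NormedAddCommGroup Y] [NormedSpace ℝ Y] [CompleteSpace Y]
    (τ : ℝ) (hτ : 0 < τ)
    (lam : ℝ → ℝ) (hlam : ContDiff ℝ 1 lam) (hlam0 : lam 0 ≠ 0)
    (φ : ℝ → Y) (hφ : Continuous φ)
    (g : ℝ → Y) (hg : ∀ t, g t = lam 0 • φ t + ∫ s in (0 : ℝ)..t, deriv lam (t - s) • φ s) :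
    Real.sqrt (∫ t in (0 : ℝ)..τ, ‖φ t‖ ^ 2)
      ≤ (Real.sqrt 2 / |lam 0|)
          * Real.exp (τ * (∫ t in (0 : ℝ)..τ, (deriv lam t) ^ 2) / (lam 0) ^ 2)
          * Real.sqrt (∫ t in (0 : ℝ)..τ, ‖g t‖ ^ 2) := by
  set c : ℝ := lam 0 with hc
  have hc2 : (0 : ℝ) < c ^ 2 := by positivity
  set K : ℝ := ∫ t in (0 : ℝ)..τ, (deriv lam t) ^ 2 with hKdef
  have hlam' : Continuous (deriv lam) := hlam.continuous_deriv le_rfl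
  have hK0 : 0 ≤ K := intervalIntegral.integral_nonneg hτ.le fun x _ => sq_nonneg _
  set a : ℝ := 2 * K / c ^ 2 with ha
  have ha0 : 0 ≤ a := by positivity
  -- basic continuous functions
  have hφn2 : Continuous fun t : ℝ => ‖φ t‖ ^ 2 := (hφ.norm).pow 2
  have hI : Continuous fun t : ℝ => ∫ s in (0 : ℝ)..t, deriv lam (t - s) • φ s := by
    apply intervalIntegral.continuous_parametric_intervalIntegral_of_continuous
      (f := fun t s => deriv lam (t - s) • φ s) _ continuous_id
    exact ((hlam'.comp (continuous_fst.sub continuous_snd)).smul (hφ.comp continuous_snd))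
  have hgc : Continuous g := by
    have : g = fun t => c • φ t + ∫ s in (0 : ℝ)..t, deriv lam (t - s) • φ s := funext hg
    rw [this]
    exact (hφ.const_smul c).add hI
  have hgn2 : Continuous fun t : ℝ => ‖g t‖ ^ 2 := (hgc.norm).pow 2
  set F : ℝ → ℝ := fun t => ∫ s in (0 : ℝ)..t, ‖φ s‖ ^ 2 with hFdef
  have hFc : Continuous F := by
    apply intervalIntegral.continuous_parametric_intervalIntegral_of_continuous
      (f := fun _ s => ‖φ s‖ ^ 2) _ continuous_id
    exact hφn2.comp continuous_snd
  have hF' : ∀ t, HasDerivAt F (‖φ t‖ ^ 2) t := fun t =>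
    intervalIntegral.integral_hasDerivAt_right (hφn2.intervalIntegrable _ _)
      (hφn2.stronglyMeasurableAtFilter _ _) hφn2.continuousAt
  have hFnonneg : ∀ t, 0 ≤ t → 0 ≤ F t := fun t ht =>
    intervalIntegral.integral_nonneg ht fun x _ => sq_nonneg _
  -- key estimate for the convolution term
  have hIkey : ∀ t ∈ Set.Icc (0 : ℝ) τ,
      ‖(∫ s in (0 : ℝ)..t, deriv lam (t - s) • φ s)‖ ^ 2 ≤ K * F t := by
    intro t ht
    obtain ⟨ht0, htτ⟩ := ht
    have h1 : ‖(∫ s in (0 : ℝ)..t, deriv lam (t - s) • φ s)‖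
        ≤ ∫ s in (0 : ℝ)..t, |deriv lam (t - s)| * ‖φ s‖ := by
      refine (intervalIntegral.norm_integral_le_integral_norm ht0).trans_eq ?_
      refine intervalIntegral.integral_congr fun s _ => ?_
      rw [norm_smul, Real.norm_eq_abs]
    have h2 : (∫ s in (0 : ℝ)..t, |deriv lam (t - s)| * ‖φ s‖)
        ≤ Real.sqrt (∫ s in (0 : ℝ)..t, |deriv lam (t - s)| ^ 2)
          * Real.sqrt (∫ s in (0 : ℝ)..t, ‖φ s‖ ^ 2) := by
      refine cs_aux ?_ hφ.norm (fun x => abs_nonneg _) (fun x => norm_nonneg _) ht0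
      exact (hlam'.comp (continuous_const.sub continuous_id)).abs
    have h3 : (∫ s in (0 : ℝ)..t, |deriv lam (t - s)| ^ 2) ≤ K := by
      have e : (∫ s in (0 : ℝ)..t, |deriv lam (t - s)| ^ 2)
          = ∫ s in (0 : ℝ)..t, (deriv lam s) ^ 2 := by
        have := intervalIntegral.integral_comp_sub_left
          (a := (0:ℝ)) (b := t) (fun u => (deriv lam u) ^ 2) t
        simp only [sub_zero, sub_self] at this
        rw [← this]
        exact intervalIntegral.integral_congr fun s _ => by rw [sq_abs]
      rw [e, hKdef]
      refine intervalIntegral.integral_mono_interval le_rfl ht0 htτ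
        (Filter.Eventually.of_forall fun x => sq_nonneg _)
        (((hlam'.pow 2).intervalIntegrable _ _))
    have hsq : ‖(∫ s in (0 : ℝ)..t, deriv lam (t - s) • φ s)‖
        ≤ Real.sqrt (K * F t) := by
      refine h1.trans (h2.trans ?_)
      have h4 : 0 ≤ (∫ s in (0 : ℝ)..t, |deriv lam (t - s)| ^ 2) :=
        intervalIntegral.integral_nonneg ht0 fun x _ => sq_nonneg _
      rw [← Real.sqrt_mul h4]
      exact Real.sqrt_le_sqrt (mul_le_mul_of_nonneg_right h3 (hFnonneg t ht0))
    calc ‖(∫ s in (0 : ℝ)..t, deriv lam (t - s) • φ s)‖ ^ 2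
        ≤ Real.sqrt (K * F t) ^ 2 := by
          exact pow_le_pow_left₀ (norm_nonneg _) hsq 2
      _ = K * F t := Real.sq_sqrt (mul_nonneg hK0 (hFnonneg t ht0))
  -- pointwise differential inequality
  have key : ∀ t ∈ Set.Icc (0 : ℝ) τ,
      ‖φ t‖ ^ 2 ≤ 2 / c ^ 2 * ‖g t‖ ^ 2 + a * F t := by
    intro t ht
    have hIt := hIkey t ht
    set I : Y := ∫ s in (0 : ℝ)..t, deriv lam (t - s) • φ s with hIdef
    have hcphi : c • φ t = g t - I := by rw [hg t]; abel
    have h1 : c ^ 2 * ‖φ t‖ ^ 2 = ‖c • φ t‖ ^ 2 := by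
      rw [norm_smul, Real.norm_eq_abs, mul_pow, sq_abs]
    have h2 : ‖c • φ t‖ ≤ ‖g t‖ + ‖I‖ := by rw [hcphi]; exact norm_sub_le _ _
    have h3 : ‖c • φ t‖ ^ 2 ≤ (‖g t‖ + ‖I‖) ^ 2 :=
      pow_le_pow_left₀ (norm_nonneg _) h2 2
    have h4 : c ^ 2 * ‖φ t‖ ^ 2 ≤ 2 * ‖g t‖ ^ 2 + 2 * (K * F t) := by
      rw [h1]
      nlinarith [sq_nonneg (‖g t‖ - ‖I‖), hIt]
    rw [ha, div_mul_eq_mul_div, div_mul_eq_mul_div, ← add_div, le_div_iff₀ hc2]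
    nlinarith [h4]
  -- Gronwall argument
  set b : ℝ → ℝ := fun s => Real.exp (-a * s) * (2 / c ^ 2 * ‖g s‖ ^ 2) with hbdef
  have hbc : Continuous b :=
    ((Real.continuous_exp.comp (continuous_const.mul continuous_id)).mul
      (continuous_const.mul hgn2))
  set B : ℝ → ℝ := fun t => ∫ s in (0 : ℝ)..t, b s with hBdef
  have hB' : ∀ t, HasDerivAt B (b t) t := fun t =>
    intervalIntegral.integral_hasDerivAt_right (hbc.intervalIntegrable _ _)
      (hbc.stronglyMeasurableAtFilter _ _) hbc.continuousAt
  set H : ℝ → ℝ := fun t => Real.exp (-a * t) * F t - B t with hHdef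
  have hE' : ∀ t : ℝ, HasDerivAt (fun u => Real.exp (-a * u)) (Real.exp (-a * t) * (-a)) t :=
    fun t => by simpa using ((hasDerivAt_id t).const_mul (-a)).exp
  have hH' : ∀ t, HasDerivAt H
      (Real.exp (-a * t) * (-a) * F t + Real.exp (-a * t) * ‖φ t‖ ^ 2 - b t) t := fun t =>
    ((hE' t).mul (hF' t)).sub (hB' t)
  have hanti : AntitoneOn H (Set.Icc 0 τ) := by
    refine antitoneOn_of_deriv_nonpos (convex_Icc 0 τ)
      (fun x _ => ((hH' x).differentiableAt.continuousAt).continuousWithinAt)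
      (fun x hx => (hH' x).differentiableAt.differentiableWithinAt) ?_
    intro x hx
    rw [interior_Icc] at hx
    rw [(hH' x).deriv]
    have hkx := key x (Set.Ioo_subset_Icc_self hx)
    have hex : 0 < Real.exp (-a * x) := Real.exp_pos _
    simp only [hbdef]
    nlinarith [hkx, hex, mul_le_mul_of_nonneg_left hkx hex.le]
  have hH0 : H 0 = 0 := by
    simp only [hHdef, hBdef, hFdef, intervalIntegral.integral_same, mul_zero, sub_zero, sub_self]
  have hHτ : H τ ≤ 0 := by
    rw [← hH0]
    exact hanti (Set.left_mem_Icc.2 hτ.le) (Set.right_mem_Icc.2 hτ.le) hτ.le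
  have hBle : B τ ≤ 2 / c ^ 2 * ∫ t in (0 : ℝ)..τ, ‖g t‖ ^ 2 := by
    rw [← intervalIntegral.integral_const_mul]
    refine intervalIntegral.integral_mono_on hτ.le (hbc.intervalIntegrable _ _)
      ((continuous_const.mul hgn2).intervalIntegrable _ _) fun s hs => ?_
    have h1 : Real.exp (-a * s) ≤ 1 := by
      rw [Real.exp_le_one_iff]
      have : 0 ≤ a * s := mul_nonneg ha0 hs.1
      linarith
    have h2 : 0 ≤ 2 / c ^ 2 * ‖g s‖ ^ 2 := by positivity
    calc b s ≤ 1 * (2 / c ^ 2 * ‖g s‖ ^ 2) := mul_le_mul_of_nonneg_right h1 h2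
      _ = 2 / c ^ 2 * ‖g s‖ ^ 2 := one_mul _
  set G : ℝ := ∫ t in (0 : ℝ)..τ, ‖g t‖ ^ 2 with hGdef
  have hG0 : 0 ≤ G := intervalIntegral.integral_nonneg hτ.le fun x _ => sq_nonneg _
  have hFτ : F τ ≤ Real.exp (a * τ) * (2 / c ^ 2 * G) := by
    have h1 : Real.exp (-a * τ) * F τ ≤ 2 / c ^ 2 * G := by
      have := hHτ
      simp only [hHdef] at this
      linarith [hBle]
    calc F τ = Real.exp (a * τ) * (Real.exp (-a * τ) * F τ) := by
          rw [← mul_assoc, ← Real.exp_add]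
          ring_nf
          simp
      _ ≤ Real.exp (a * τ) * (2 / c ^ 2 * G) :=
          mul_le_mul_of_nonneg_left h1 (Real.exp_pos _).le
  -- conclusion
  have hfinal : Real.sqrt (F τ) ≤ Real.sqrt 2 / |c| * Real.exp (τ * K / c ^ 2) * Real.sqrt G := by
    refine (Real.sqrt_le_sqrt hFτ).trans ?_
    rw [Real.sqrt_mul (Real.exp_pos _).le, Real.sqrt_mul (by positivity : (0:ℝ) ≤ 2 / c ^ 2),
      ← Real.exp_half, Real.sqrt_div (by norm_num : (0:ℝ) ≤ 2), Real.sqrt_sq_eq_abs]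
    have harg : a * τ / 2 = τ * K / c ^ 2 := by rw [ha]; field_simp
    rw [harg]
    ring_nf
    exact le_rfl
  exact hfinal
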